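/- Every positive integer n has as many partitions with λ₁ > λ₂ + 2λ_m (dimension ≥ 3; for dimension 2, λ₁ > 3λ₂) as partitions with λ₁ > λ₂ + λ_m and k₁ < k_m, and also as many as partitions with 2k₁ < k_m. -/

import Mathlib

/-- A partition `(λ₁,...,λ_m)×[k₁,...,k_m]`: strictly decreasing positive parts
with positive multiplicities, same length. -/
def IsPart (p : List ℕ × List ℕ) : Prop :=
  p.1.length = p.2.length ∧ List.Chain' (· > ·) p.1 ∧
  (∀ x ∈ p.1, 0 < x) ∧ (∀ x ∈ p.2, 0 < x)

/-- size of a partition: Σ kᵢ λᵢ -/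
def psize (p : List ℕ × List ℕ) : ℕ := (List.zipWith (· * ·) p.1 p.2).sum

def parts1 (L : List ℕ) : ℕ := L.headD 0      -- λ₁
def parts2 (L : List ℕ) : ℕ := L.tail.headD 0 -- λ₂
def parts3 (L : List ℕ) : ℕ := L.tail.tail.headD 0 -- λ₃
def partsLast (L : List ℕ) : ℕ := L.getLastD 0 -- λ_m
def partsPrelast (L : List ℕ) : ℕ := L.dropLast.getLastD 0 -- λ_{m-1}

def T0parts : List ℕ → List ℕ
  | a :: b :: t => b :: (t ++ [a - b])
  | l => l

def T0mults : List ℕ → List ℕ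
  | a :: b :: t => (a + b) :: (t ++ [a])
  | l => l

def T1parts (L : List ℕ) : List ℕ := (parts1 L - partsLast L) :: L.tail

def T1mults (K : List ℕ) : List ℕ := K.dropLast ++ [K.headD 0 + K.getLastD 0]

def TDparts (L : List ℕ) : List ℕ := L.tail

def TDmults : List ℕ → List ℕ
  | [a, b] => [2 * a + b]
  | a :: b :: t => (a + b) :: (t.dropLast ++ [a + t.getLastD 0])
  | l => l

def T0map (p : List ℕ × List ℕ) : List ℕ × List ℕ := (T0parts p.1, T0mults p.2)
def T1map (p : List ℕ × List ℕ) : List ℕ × List ℕ := (T1parts p.1, T1mults p.2)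

/-- △₀ : partitions of dimension ≥ 2 with λ₁ < λ₂ + λ_m -/
def Tri0 : Set (List ℕ × List ℕ) :=
  {p | IsPart p ∧ 2 ≤ p.1.length ∧ parts1 p.1 < parts2 p.1 + partsLast p.1}

/-- △₁ : partitions of dimension ≥ 2 with λ₁ > λ₂ + λ_m -/
def Tri1 : Set (List ℕ × List ℕ) :=
  {p | IsPart p ∧ 2 ≤ p.1.length ∧ parts2 p.1 + partsLast p.1 < parts1 p.1}

/-- M₀ : partitions of dimension ≥ 2 with k₁ > k_m -/
def M0 : Set (List ℕ × List ℕ) :=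
  {p | IsPart p ∧ 2 ≤ p.1.length ∧ p.2.getLastD 0 < p.2.headD 0}

/-- M₁ : partitions of dimension ≥ 2 with k₁ < k_m -/
def M1 : Set (List ℕ × List ℕ) :=
  {p | IsPart p ∧ 2 ≤ p.1.length ∧ p.2.headD 0 < p.2.getLastD 0}

/-- △_d^G : partitions with λ₂ + dλ_m < λ₁ < λ₂ + (d+1)λ_m -/
def GaussSet (d : ℕ) : Set (List ℕ × List ℕ) :=
  {p | IsPart p ∧ 2 ≤ p.1.length ∧
    parts2 p.1 + d * partsLast p.1 < parts1 p.1 ∧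
    parts1 p.1 < parts2 p.1 + (d + 1) * partsLast p.1}

open List

lemma getLastD_cc (a c : ℕ) (L : List ℕ) : (a :: L ++ [c]).getLastD 0 = c := by
  rw [show a :: L ++ [c] = (a :: L) ++ [c] from rfl]
  simp [List.getLastD, List.getLast?_concat]

lemma dropLast_cc (a c : ℕ) (L : List ℕ) : (a :: L ++ [c]).dropLast = a :: L := by
  rw [show a :: L ++ [c] = (a :: L) ++ [c] from rfl, List.dropLast_concat]

lemma chain_cc (a c : ℕ) (L : List ℕ) :
    Chain' (· > ·) (a :: L ++ [c]) ↔ (L ++ [c]).headD 0 < a ∧ Chain' (· > ·) (L ++ [c]) := by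
  cases L <;> simp [List.Chain', List.isChain_cons_cons]

lemma T1map_eq (a c k e : ℕ) (L K : List ℕ) :
    T1map (a :: L ++ [c], k :: K ++ [e]) = ((a - c) :: L ++ [c], k :: K ++ [k + e]) := by
  unfold T1map T1parts T1mults parts1 partsLast
  rw [getLastD_cc, getLastD_cc, dropLast_cc]; rfl

def Smap (p : List ℕ × List ℕ) : List ℕ × List ℕ :=
  ((parts1 p.1 + partsLast p.1) :: p.1.tail,
   p.2.dropLast ++ [p.2.getLastD 0 - p.2.headD 0])

lemma Smap_eq (a c k e : ℕ) (L K : List ℕ) :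
    Smap (a :: L ++ [c], k :: K ++ [e]) = ((a + c) :: L ++ [c], k :: K ++ [e - k]) := by
  unfold Smap parts1 partsLast
  rw [getLastD_cc, getLastD_cc, dropLast_cc]; rfl

lemma psize_cc (a c k e : ℕ) (L K : List ℕ) (h : L.length = K.length) :
    psize (a :: L ++ [c], k :: K ++ [e]) =
      a * k + (List.zipWith (· * ·) L K).sum + c * e := by
  unfold psize
  show (List.zipWith (· * ·) (a :: (L ++ [c])) (k :: (K ++ [e]))).sum = _
  rw [List.zipWith_cons_cons, List.zipWith_append h]
  simp; ring

lemma decomp (p : List ℕ × List ℕ) (hlen : p.1.length = p.2.length)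
    (h2 : 2 ≤ p.1.length) :
    ∃ a c k e L K, L.length = K.length ∧ p = (a :: L ++ [c], k :: K ++ [e]) := by
  obtain ⟨P, Q⟩ := p
  dsimp at hlen h2
  match P, Q, hlen, h2 with
  | a :: t, k :: s, hlen, h2 =>
    have ht : t ≠ [] := by rintro rfl; simp at h2
    have hs : s ≠ [] := by
      rintro rfl
      rw [length_cons, length_cons, length_nil] at hlen
      rw [length_cons] at h2
      omega
    refine ⟨a, t.getLast ht, k, s.getLast hs, t.dropLast, s.dropLast, ?_, ?_⟩
    · simp at hlen ⊢; omega
    · simp only [List.cons_append]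
      rw [List.dropLast_append_getLast ht, List.dropLast_append_getLast hs]

lemma mem_common (n a c k e : ℕ) (L K : List ℕ) (h : L.length = K.length) :
    (IsPart (a :: L ++ [c], k :: K ++ [e]) ∧ 2 ≤ (a :: L ++ [c]).length ∧
      psize (a :: L ++ [c], k :: K ++ [e]) = n) ↔
    ((L ++ [c]).headD 0 < a ∧ Chain' (· > ·) (L ++ [c]) ∧ 0 < a ∧
      (∀ x ∈ L, 0 < x) ∧ 0 < c ∧ 0 < k ∧ (∀ x ∈ K, 0 < x) ∧ 0 < e ∧
      a * k + (List.zipWith (· * ·) L K).sum + c * e = n) := by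
  rw [psize_cc a c k e L K h]
  unfold IsPart
  constructor
  · rintro ⟨⟨_, hch, hp1, hp2⟩, -, hsz⟩
    rw [chain_cc] at hch
    refine ⟨hch.1, hch.2, hp1 a (by simp), fun x hx => hp1 x (by simp [hx]),
      hp1 c (by simp), hp2 k (by simp), fun x hx => hp2 x (by simp [hx]),
      hp2 e (by simp), hsz⟩
  · rintro ⟨h1, h2, h3, h4, h5, h6, h7, h8, h9⟩
    refine ⟨⟨by simp [h], (chain_cc a c L).2 ⟨h1, h2⟩, ?_, ?_⟩, by simp, h9⟩
    · intro x hx; simp at hx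
      rcases hx with rfl | hx | rfl
      exacts [h3, h4 x hx, h5]
    · intro x hx; simp at hx
      rcases hx with rfl | hx | rfl
      exacts [h6, h7 x hx, h8]

lemma parts1_cc (a c : ℕ) (L : List ℕ) : parts1 (a :: L ++ [c]) = a := rfl
lemma parts2_cc (a c : ℕ) (L : List ℕ) : parts2 (a :: L ++ [c]) = (L ++ [c]).headD 0 := rfl
lemma partsLast_cc (a c : ℕ) (L : List ℕ) : partsLast (a :: L ++ [c]) = c := getLastD_cc a c L
lemma headD_cc (k e : ℕ) (K : List ℕ) : (k :: K ++ [e]).headD 0 = k := rfl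

def SetA (n : ℕ) : Set (List ℕ × List ℕ) :=
  {p | IsPart p ∧ 2 ≤ p.1.length ∧ psize p = n ∧
    parts2 p.1 + 2 * partsLast p.1 < parts1 p.1}
def SetB (n : ℕ) : Set (List ℕ × List ℕ) :=
  {p | IsPart p ∧ 2 ≤ p.1.length ∧ psize p = n ∧
    parts2 p.1 + partsLast p.1 < parts1 p.1 ∧ p.2.headD 0 < p.2.getLastD 0}
def SetC (n : ℕ) : Set (List ℕ × List ℕ) :=
  {p | IsPart p ∧ 2 ≤ p.1.length ∧ psize p = n ∧ 2 * p.2.headD 0 < p.2.getLastD 0}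

lemma memA_iff (n a c k e : ℕ) (L K : List ℕ) (h : L.length = K.length) :
    (a :: L ++ [c], k :: K ++ [e]) ∈ SetA n ↔
      ((L ++ [c]).headD 0 + 2 * c < a ∧ Chain' (· > ·) (L ++ [c]) ∧
        (∀ x ∈ L, 0 < x) ∧ 0 < c ∧ 0 < k ∧ (∀ x ∈ K, 0 < x) ∧ 0 < e ∧
        a * k + (List.zipWith (· * ·) L K).sum + c * e = n) := by
  simp only [SetA, Set.mem_setOf_eq, parts1_cc, parts2_cc, partsLast_cc]
  constructor
  · rintro ⟨h1, h2, h3, h4⟩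
    obtain ⟨-, hc, -, hL, hcp, hk, hK, he, hs⟩ :=
      (mem_common n a c k e L K h).1 ⟨h1, h2, h3⟩
    exact ⟨h4, hc, hL, hcp, hk, hK, he, hs⟩
  · rintro ⟨h4, hc, hL, hcp, hk, hK, he, hs⟩
    obtain ⟨g1, g2, g3⟩ :=
      (mem_common n a c k e L K h).2
        ⟨by omega, hc, by omega, hL, hcp, hk, hK, he, hs⟩
    exact ⟨g1, g2, g3, h4⟩

lemma memB_iff (n a c k e : ℕ) (L K : List ℕ) (h : L.length = K.length) :
    (a :: L ++ [c], k :: K ++ [e]) ∈ SetB n ↔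
      ((L ++ [c]).headD 0 + c < a ∧ k < e ∧ Chain' (· > ·) (L ++ [c]) ∧
        (∀ x ∈ L, 0 < x) ∧ 0 < c ∧ 0 < k ∧ (∀ x ∈ K, 0 < x) ∧ 0 < e ∧
        a * k + (List.zipWith (· * ·) L K).sum + c * e = n) := by
  simp only [SetB, Set.mem_setOf_eq, parts1_cc, parts2_cc, partsLast_cc,
    headD_cc, getLastD_cc]
  constructor
  · rintro ⟨h1, h2, h3, h4, h5⟩
    obtain ⟨-, hc, -, hL, hcp, hk, hK, he, hs⟩ :=
      (mem_common n a c k e L K h).1 ⟨h1, h2, h3⟩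
    exact ⟨h4, h5, hc, hL, hcp, hk, hK, he, hs⟩
  · rintro ⟨h4, h5, hc, hL, hcp, hk, hK, he, hs⟩
    obtain ⟨g1, g2, g3⟩ :=
      (mem_common n a c k e L K h).2
        ⟨by omega, hc, by omega, hL, hcp, hk, hK, he, hs⟩
    exact ⟨g1, g2, g3, h4, h5⟩

lemma memC_iff (n a c k e : ℕ) (L K : List ℕ) (h : L.length = K.length) :
    (a :: L ++ [c], k :: K ++ [e]) ∈ SetC n ↔
      ((L ++ [c]).headD 0 < a ∧ 2 * k < e ∧ Chain' (· > ·) (L ++ [c]) ∧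
        (∀ x ∈ L, 0 < x) ∧ 0 < c ∧ 0 < k ∧ (∀ x ∈ K, 0 < x) ∧ 0 < e ∧
        a * k + (List.zipWith (· * ·) L K).sum + c * e = n) := by
  simp only [SetC, Set.mem_setOf_eq, headD_cc, getLastD_cc]
  constructor
  · rintro ⟨h1, h2, h3, h4⟩
    obtain ⟨hha, hc, -, hL, hcp, hk, hK, he, hs⟩ :=
      (mem_common n a c k e L K h).1 ⟨h1, h2, h3⟩
    exact ⟨hha, h4, hc, hL, hcp, hk, hK, he, hs⟩
  · rintro ⟨hha, h4, hc, hL, hcp, hk, hK, he, hs⟩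
    obtain ⟨g1, g2, g3⟩ :=
      (mem_common n a c k e L K h).2
        ⟨hha, hc, by omega, hL, hcp, hk, hK, he, hs⟩
    exact ⟨g1, g2, g3, h4⟩

lemma ST1 (a c k e : ℕ) (L K : List ℕ) (hca : c ≤ a) :
    Smap (T1map (a :: L ++ [c], k :: K ++ [e])) = (a :: L ++ [c], k :: K ++ [e]) := by
  rw [T1map_eq, Smap_eq, Nat.sub_add_cancel hca, Nat.add_sub_cancel_left]

lemma T1S (a c k e : ℕ) (L K : List ℕ) (hke : k ≤ e) :
    T1map (Smap (a :: L ++ [c], k :: K ++ [e])) = (a :: L ++ [c], k :: K ++ [e]) := by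
  rw [Smap_eq, T1map_eq, Nat.add_sub_cancel, Nat.add_sub_cancel' hke]

lemma bijAB (n : ℕ) : Set.BijOn T1map (SetA n) (SetB n) := by
  refine ⟨?_, ?_, ?_⟩
  · -- MapsTo
    intro p hp
    obtain ⟨a, c, k, e, L, K, h, rfl⟩ := decomp p hp.1.1 hp.2.1
    rw [memA_iff n a c k e L K h] at hp
    obtain ⟨h4, hc, hL, hcp, hk, hK, he, hs⟩ := hp
    rw [T1map_eq, memB_iff n (a - c) c k (k + e) L K h]
    have hca : c ≤ a := by omega
    have e1 : (a - c) * k = a * k - c * k := Nat.sub_mul a c k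
    have e2 : c * (k + e) = c * k + c * e := Nat.mul_add c k e
    have e3 : c * k ≤ a * k := Nat.mul_le_mul_right k hca
    exact ⟨by omega, by omega, hc, hL, hcp, hk, hK, by omega, by omega⟩
  · -- InjOn
    intro p hp q hq heq
    obtain ⟨a, c, k, e, L, K, h, rfl⟩ := decomp p hp.1.1 hp.2.1
    obtain ⟨a', c', k', e', L', K', h', rfl⟩ := decomp q hq.1.1 hq.2.1
    rw [memA_iff n a c k e L K h] at hp
    rw [memA_iff n a' c' k' e' L' K' h'] at hq
    rw [← ST1 a c k e L K (by omega), ← ST1 a' c' k' e' L' K' (by omega), heq]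
  · -- SurjOn
    intro q hq
    obtain ⟨a, c, k, e, L, K, h, rfl⟩ := decomp q hq.1.1 hq.2.1
    rw [memB_iff n a c k e L K h] at hq
    obtain ⟨h4, h5, hc, hL, hcp, hk, hK, he, hs⟩ := hq
    have hke : k ≤ e := by omega
    refine ⟨((a + c) :: L ++ [c], k :: K ++ [e - k]), ?_, ?_⟩
    · rw [memA_iff n (a + c) c k (e - k) L K h]
      have e1 : (a + c) * k = a * k + c * k := Nat.add_mul a c k
      have e2 : c * e = c * k + c * (e - k) := by
        rw [← Nat.mul_add, Nat.add_sub_cancel' hke]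
      exact ⟨by omega, hc, hL, hcp, hk, hK, by omega, by omega⟩
    · rw [T1map_eq, Nat.add_sub_cancel, Nat.add_sub_cancel' hke]

lemma bijBC (n : ℕ) : Set.BijOn T1map (SetB n) (SetC n) := by
  refine ⟨?_, ?_, ?_⟩
  · intro p hp
    obtain ⟨a, c, k, e, L, K, h, rfl⟩ := decomp p hp.1.1 hp.2.1
    rw [memB_iff n a c k e L K h] at hp
    obtain ⟨h4, h5, hc, hL, hcp, hk, hK, he, hs⟩ := hp
    rw [T1map_eq, memC_iff n (a - c) c k (k + e) L K h]
    have hca : c ≤ a := by omega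
    have e1 : (a - c) * k = a * k - c * k := Nat.sub_mul a c k
    have e2 : c * (k + e) = c * k + c * e := Nat.mul_add c k e
    have e3 : c * k ≤ a * k := Nat.mul_le_mul_right k hca
    exact ⟨by omega, by omega, hc, hL, hcp, hk, hK, by omega, by omega⟩
  · intro p hp q hq heq
    obtain ⟨a, c, k, e, L, K, h, rfl⟩ := decomp p hp.1.1 hp.2.1
    obtain ⟨a', c', k', e', L', K', h', rfl⟩ := decomp q hq.1.1 hq.2.1
    rw [memB_iff n a c k e L K h] at hp
    rw [memB_iff n a' c' k' e' L' K' h'] at hq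
    rw [← ST1 a c k e L K (by omega), ← ST1 a' c' k' e' L' K' (by omega), heq]
  · intro q hq
    obtain ⟨a, c, k, e, L, K, h, rfl⟩ := decomp q hq.1.1 hq.2.1
    rw [memC_iff n a c k e L K h] at hq
    obtain ⟨hha, h4, hc, hL, hcp, hk, hK, he, hs⟩ := hq
    have hke : k ≤ e := by omega
    refine ⟨((a + c) :: L ++ [c], k :: K ++ [e - k]), ?_, ?_⟩
    · rw [memB_iff n (a + c) c k (e - k) L K h]
      have e1 : (a + c) * k = a * k + c * k := Nat.add_mul a c k
      have e2 : c * e = c * k + c * (e - k) := by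
        rw [← Nat.mul_add, Nat.add_sub_cancel' hke]
      exact ⟨by omega, by omega, hc, hL, hcp, hk, hK, by omega, by omega⟩
    · rw [T1map_eq, Nat.add_sub_cancel, Nat.add_sub_cancel' hke]

lemma ncard_eq_of_bijOn {s t : Set (List ℕ × List ℕ)} {f : List ℕ × List ℕ → List ℕ × List ℕ}
    (h : Set.BijOn f s t) : s.ncard = t.ncard := by
  rw [← h.image_eq, Set.ncard_image_of_injOn h.injOn]

theorem stmt14' (n : ℕ) (hn : 0 < n) :
    (SetA n).ncard = (SetB n).ncard ∧ (SetA n).ncard = (SetC n).ncard :=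
  ⟨ncard_eq_of_bijOn (bijAB n),
   (ncard_eq_of_bijOn (bijAB n)).trans (ncard_eq_of_bijOn (bijBC n))⟩

theorem stmt14 (n : ℕ) (hn : 0 < n) :
    {p : List ℕ × List ℕ | IsPart p ∧ 2 ≤ p.1.length ∧ psize p = n ∧
        parts2 p.1 + 2 * partsLast p.1 < parts1 p.1}.ncard =
      {p : List ℕ × List ℕ | IsPart p ∧ 2 ≤ p.1.length ∧ psize p = n ∧
        parts2 p.1 + partsLast p.1 < parts1 p.1 ∧
        p.2.headD 0 < p.2.getLastD 0}.ncard ∧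
    {p : List ℕ × List ℕ | IsPart p ∧ 2 ≤ p.1.length ∧ psize p = n ∧
        parts2 p.1 + 2 * partsLast p.1 < parts1 p.1}.ncard =
      {p : List ℕ × List ℕ | IsPart p ∧ 2 ≤ p.1.length ∧ psize p = n ∧
        2 * p.2.headD 0 < p.2.getLastD 0}.ncard :=
  stmt14' n hn
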